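/- Let G be a finite subgroup of GL(n, ℤ) and let p be an odd prime. Then the reduction homomorphism GL(n, ℤ) → GL(n, ℤ/pℤ) is injective on G. Consequently, every finite subgroup of GL(n, ℤ) has order at most |GL(n, ℤ/3ℤ)|. -/

import Mathlib

open Matrix Finset

lemma key (n p q : ℕ) (hp : p.Prime) (hodd : Odd p) (hq : q.Prime)
    (A : Matrix (Fin n) (Fin n) ℤ) (hAq : A ^ q = 1)
    (hdvd : ∀ i j, (p:ℤ) ∣ (A - 1) i j) : A = 1 := by
  by_contra hA
  set B : Matrix (Fin n) (Fin n) ℤ := A - 1 with hB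
  have hB0 : B ≠ 0 := fun h => hA (by rw [← sub_eq_zero]; exact h)
  have hp1 : (1:ℕ) < p := hp.one_lt
  have hex : ∃ t, ¬ ∀ i j, (p:ℤ)^(t+1) ∣ B i j := by
    obtain ⟨i, j, hij⟩ : ∃ i j, B i j ≠ 0 := by
      by_contra h; push_neg at h; exact hB0 (by ext i j; exact h i j)
    refine ⟨(B i j).natAbs, fun h => ?_⟩
    have hd := h i j
    have hle : (p:ℤ)^((B i j).natAbs + 1) ≤ |B i j| := Int.le_of_dvd (abs_pos.mpr hij) ((dvd_abs _ _).mpr hd)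
    have : ((B i j).natAbs : ℤ) < (p:ℤ)^((B i j).natAbs + 1) := by
      calc ((B i j).natAbs : ℤ) < (2:ℤ)^((B i j).natAbs + 1) := by
            exact_mod_cast Nat.lt_two_pow_self.trans (Nat.pow_lt_pow_succ one_lt_two)
        _ ≤ (p:ℤ)^((B i j).natAbs + 1) := by
            apply pow_le_pow_left₀ (by norm_num); exact_mod_cast hp.two_le
    rw [Int.abs_eq_natAbs] at hle
    omega
  classical
  set k := Nat.find hex with hk
  have hkspec := Nat.find_spec hex
  rw [← hk] at hkspec
  have hk0 : k ≠ 0 := by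
    intro h; apply hkspec; rw [h]; simpa using hdvd
  have hdvdk : ∀ i j, (p:ℤ)^k ∣ B i j := by
    have := Nat.find_min hex (m := k - 1) (by omega)
    push_neg at this
    have hk1 : k - 1 + 1 = k := by omega
    rwa [hk1] at this
  push_neg at hkspec
  obtain ⟨i, j, hij⟩ := hkspec
  set C : Matrix (Fin n) (Fin n) ℤ := fun i j => B i j / (p:ℤ)^k with hC
  have hBC : B = (p:ℤ)^k • C := by
    ext a b
    simp only [hC, Matrix.smul_apply, smul_eq_mul]
    exact (Int.mul_ediv_cancel' (hdvdk a b)).symm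
  have hCij : ¬ (p:ℤ) ∣ C i j := by
    intro h
    apply hij
    have hBij : B i j = (p:ℤ)^k * C i j := by rw [hBC]; rfl
    rw [hBij, pow_succ]
    exact mul_dvd_mul_left _ h
  have hpk0 : (p:ℤ)^k ≠ 0 := pow_ne_zero _ (by exact_mod_cast hp.pos.ne')
  have hA1 : A = ((p:ℤ)^k • C) + 1 := by rw [← hBC, hB]; abel
  have hexp : ∑ m ∈ range (q+1), ((p:ℤ)^k • C)^m * (q.choose m : Matrix (Fin n) (Fin n) ℤ) = 1 := by
    rw [← hAq, hA1]
    have := (Commute.one_right ((p:ℤ)^k • C)).add_pow q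
    simpa using this.symm
  have hentry : ∑ m ∈ range (q+1), (p:ℤ)^(k*m) * ((C^m) i j * (q.choose m)) = (1 : Matrix (Fin n) (Fin n) ℤ) i j := by
    have h2 := congrFun (congrFun hexp i) j
    rw [Matrix.sum_apply] at h2
    rw [← h2]
    apply Finset.sum_congr rfl
    intro m hm
    rw [smul_pow, smul_mul_assoc, Matrix.smul_apply, ← Matrix.diagonal_natCast, Matrix.mul_diagonal, pow_mul]
    simp [smul_eq_mul, mul_assoc]
  -- peel off the m = 0 and m = 1 terms
  have hq2 : 2 ≤ q := hq.two_le
  rw [range_eq_Ico, Finset.sum_eq_sum_Ico_succ_bot (by omega),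
      Finset.sum_eq_sum_Ico_succ_bot (by omega : 1 < q + 1)] at hentry
  simp only [Nat.choose_zero_right, Nat.choose_one_right, pow_one, pow_zero, mul_zero,
    Nat.mul_one, mul_one, one_mul, Nat.cast_one] at hentry
  set S2 : ℤ := ∑ m ∈ Finset.Ico 2 (q+1), (p:ℤ)^(k*m) * ((C^m) i j * (q.choose m)) with hS2
  have hmain : (p:ℤ)^k * (C i j * q) = -S2 := by
    have h1 : ((1:Matrix (Fin n) (Fin n) ℤ) ^ 0) = (1:Matrix (Fin n) (Fin n) ℤ) := pow_zero 1
    linarith [hentry]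
  have hk1 : 1 ≤ k := Nat.one_le_iff_ne_zero.mpr hk0
  have hpZ : Prime (p:ℤ) := Nat.prime_iff_prime_int.mp hp
  by_cases hpq : q = p
  · -- q = p : each term of S2 is divisible by p^(k+2)
    have hp3 : 3 ≤ p := by
      rcases hodd with ⟨t, ht⟩
      have := hp.two_le
      omega
    have hS2dvd : (p:ℤ)^(k+2) ∣ S2 := by
      apply Finset.dvd_sum
      intro m hm
      simp only [Finset.mem_Ico] at hm
      rcases eq_or_lt_of_le (Nat.lt_succ_iff.mp hm.2) with hmq | hmq
      · have : (p:ℤ)^(k+2) ∣ (p:ℤ)^(k*m) := by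
          apply pow_dvd_pow
          have : q = p := hpq
          nlinarith [hm.1, hk1]
        exact this.mul_right _
      · have hch : (p:ℤ) ∣ (q.choose m : ℤ) := by
          rw [hpq] at hmq
          have := Nat.Prime.dvd_choose_self hp (by omega) hmq
          rw [hpq]
          exact_mod_cast this
        have h1 : (p:ℤ)^(k+1) ∣ (p:ℤ)^(k*m) := by
          apply pow_dvd_pow
          nlinarith [hm.1, hk1]
        have : (p:ℤ)^(k+2) ∣ (p:ℤ)^(k*m) * (q.choose m : ℤ) := by
          rw [pow_succ]
          exact mul_dvd_mul h1 hch
        calc (p:ℤ)^(k+2) ∣ (p:ℤ)^(k*m) * (q.choose m : ℤ) := this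
          _ ∣ (p:ℤ)^(k*m) * ((C^m) i j * (q.choose m : ℤ)) := by
              rw [mul_comm ((C^m) i j)]
              exact mul_dvd_mul_left _ (Dvd.intro _ rfl)
    apply hCij
    have heq : (p:ℤ)^k * (C i j * q) = (p:ℤ)^(k+1) * C i j := by
      rw [hpq]; ring
    have : (p:ℤ)^(k+1) * (p:ℤ) ∣ (p:ℤ)^(k+1) * C i j := by
      rw [← pow_succ, ← heq, hmain]
      exact hS2dvd.neg_right
    exact (mul_dvd_mul_iff_left (pow_ne_zero (k+1) (by exact_mod_cast hp.pos.ne' : (p:ℤ) ≠ 0))).mp this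
  · -- q ≠ p : each term of S2 is divisible by p^(k+1)
    have hS2dvd : (p:ℤ)^(k+1) ∣ S2 := by
      apply Finset.dvd_sum
      intro m hm
      simp only [Finset.mem_Ico] at hm
      have : (p:ℤ)^(k+1) ∣ (p:ℤ)^(k*m) := by
        apply pow_dvd_pow
        nlinarith [hm.1, hk1]
      exact this.mul_right _
    have : (p:ℤ)^k * (p:ℤ) ∣ (p:ℤ)^k * (C i j * q) := by
      rw [← pow_succ, hmain]
      exact hS2dvd.neg_right
    have hdd : (p:ℤ) ∣ C i j * (q:ℤ) := (mul_dvd_mul_iff_left hpk0).mp this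
    rcases hpZ.dvd_mul.mp hdd with h | h
    · exact hCij h
    · have : p ∣ q := Int.ofNat_dvd.mp (by exact_mod_cast h)
      exact hpq ((Nat.prime_dvd_prime_iff_eq hp hq).mp this).symm

lemma key2 (n p : ℕ) (hp : p.Prime) (hodd : Odd p) (A : GL (Fin n) ℤ)
    (hfin : IsOfFinOrder A)
    (hker : Matrix.GeneralLinearGroup.map (Int.castRingHom (ZMod p)) A = 1) : A = 1 := by
  by_contra hA
  have hm1 : 1 < orderOf A := by
    have h0 := hfin.orderOf_pos
    have h1 : orderOf A ≠ 1 := fun h => hA (orderOf_eq_one_iff.mp h)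
    omega
  set m := orderOf A with hmdef
  set q := m.minFac with hqdef
  have hq : q.Prime := Nat.minFac_prime (by omega)
  set B := A ^ (m / q) with hBdef
  have hBq : B ^ q = 1 := by
    rw [hBdef, ← pow_mul, Nat.div_mul_cancel (Nat.minFac_dvd m)]
    exact pow_orderOf_eq_one A
  have hB1 : B ≠ 1 := by
    intro h
    have hdvd := orderOf_dvd_of_pow_eq_one (h ▸ rfl : A ^ (m / q) = 1)
    have h1 : m / q < m := Nat.div_lt_self (by omega) hq.one_lt
    have h2 : 0 < m / q := Nat.div_pos (Nat.minFac_le (by omega)) hq.pos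
    have := Nat.le_of_dvd h2 hdvd
    omega
  have hkerB : Matrix.GeneralLinearGroup.map (Int.castRingHom (ZMod p)) B = 1 := by
    rw [hBdef, map_pow, hker, one_pow]
  -- entrywise divisibility
  have hdvd : ∀ i j, (p:ℤ) ∣ ((B : Matrix (Fin n) (Fin n) ℤ) - 1) i j := by
    intro i j
    have h3 : (((B : Matrix (Fin n) (Fin n) ℤ)) i j : ZMod p) = (1 : Matrix (Fin n) (Fin n) (ZMod p)) i j := by
      have := congrArg Units.val hkerB
      have h4 := congrFun (congrFun this i) j
      simpa [Matrix.GeneralLinearGroup.map, Matrix.map_apply] using h4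
    rw [← ZMod.intCast_zmod_eq_zero_iff_dvd, Matrix.sub_apply, Int.cast_sub, h3,
      Matrix.one_apply, Matrix.one_apply]
    by_cases h : i = j <;> simp [h]
  have hmat : (B : Matrix (Fin n) (Fin n) ℤ) = 1 := by
    apply key n p q hp hodd hq
    · rw [← Units.val_pow_eq_pow_val, hBq, Units.val_one]
    · exact hdvd
  exact hB1 (Units.ext hmat)

lemma injOnG (n p : ℕ) (hp : p.Prime) (hodd : Odd p)
    (G : Subgroup (GL (Fin n) ℤ)) (hG : Finite G) :
    Set.InjOn (Matrix.GeneralLinearGroup.map (Int.castRingHom (ZMod p))) (G : Set (GL (Fin n) ℤ)) := by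
  intro x hx y hy hxy
  have hz : x * y⁻¹ ∈ G := G.mul_mem hx (G.inv_mem hy)
  have hfin : IsOfFinOrder (x * y⁻¹) := by
    have h1 : IsOfFinOrder (⟨x * y⁻¹, hz⟩ : G) := isOfFinOrder_of_finite _
    obtain ⟨t, ht0, ht⟩ := (isOfFinOrder_iff_pow_eq_one).mp h1
    refine (isOfFinOrder_iff_pow_eq_one).mpr ⟨t, ht0, ?_⟩
    have := congrArg (Subgroup.subtype G) ht
    simpa using this
  have hker : Matrix.GeneralLinearGroup.map (Int.castRingHom (ZMod p)) (x * y⁻¹) = 1 := by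
    rw [_root_.map_mul, _root_.map_inv, hxy, mul_inv_cancel]
  have := key2 n p hp hodd _ hfin hker
  rwa [mul_inv_eq_one] at this

/-- Reduction modulo an odd prime `p` is injective on any finite subgroup of `GL(n, ℤ)`;
consequently every finite subgroup of `GL(n, ℤ)` has order at most `|GL(n, ℤ/3ℤ)|`. -/
theorem reduction_injOn_finite_subgroup (n p : ℕ) (hp : p.Prime) (hodd : Odd p)
    (G : Subgroup (GL (Fin n) ℤ)) (hG : Finite G) :
    Set.InjOn (Matrix.GeneralLinearGroup.map (Int.castRingHom (ZMod p))) (G : Set (GL (Fin n) ℤ)) ∧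
    Nat.card G ≤ Nat.card (GL (Fin n) (ZMod 3)) := by
  refine ⟨injOnG n p hp hodd G hG, ?_⟩
  have h3 := injOnG n 3 (by norm_num) (by decide) G hG
  have hinj : Function.Injective
      (fun x : G => Matrix.GeneralLinearGroup.map (Int.castRingHom (ZMod 3)) x.1) := by
    intro a b h
    exact Subtype.ext (h3 a.2 b.2 h)
  exact Nat.card_le_card_of_injective _ hinj
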